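/- Let k ≥ 3 be an odd integer, M ≥ 2 an integer, and 1 ≤ t ≤ M−1. Then (1/2)·Σ_{r=1}^{M} B̃_k(r/M)·sin(2πtr/M) = ((−1)^{(k+1)/2}·k! / (2·(2π)^k)) · M^{1−k} · ( ζ(k, t/M) − ζ(k, 1 − t/M) ). -/

import Mathlib

open scoped Classical in
/-- The periodic Bernoulli function `B̃_k(x) = B_k({x})`, with the convention
`B̃_1(x) = 0` for integer `x`. -/
noncomputable def periodicBernoulli (k : ℕ) (x : ℝ) : ℝ :=
  if k = 1 ∧ Int.fract x = 0 then 0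
  else Polynomial.aeval (Int.fract x) (Polynomial.bernoulli k)

/-- The Hurwitz zeta value `ζ(k,a) = Σ_{n ≥ 0} (n+a)^{−k}` (for `k ≥ 2`, `0 < a ≤ 1`). -/
noncomputable def hurwitzZetaValue (k : ℕ) (a : ℝ) : ℝ :=
  ∑' n : ℕ, 1 / ((n : ℝ) + a) ^ k

open Finset Real

lemma cos_sum_range (M : ℕ) (hM : 1 ≤ M) (c : ℤ) :
    ∑ r ∈ Finset.range M, Real.cos (2 * π * c * r / M)
      = if (M : ℤ) ∣ c then (M : ℝ) else 0 := by
  have hM0 : (M : ℝ) ≠ 0 := by positivity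
  have hMC : (M : ℂ) ≠ 0 := Nat.cast_ne_zero.mpr (by omega)
  have h2π : (2 * (π : ℂ) * Complex.I) ≠ 0 := by
    simp [Real.pi_ne_zero, Complex.I_ne_zero, Complex.ofReal_ne_zero]
  set z : ℂ := Complex.exp (2 * π * Complex.I * c / M) with hz
  have hre : ∀ r : ℕ, Real.cos (2 * π * c * r / M) = (z ^ r).re := by
    intro r
    rw [hz, ← Complex.exp_nat_mul]
    have : (r : ℂ) * (2 * π * Complex.I * c / M) = ((2 * π * c * r / M : ℝ) : ℂ) * Complex.I := by
      push_cast
      field_simp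
    rw [this, Complex.exp_ofReal_mul_I_re]
  simp_rw [hre]
  rw [← Complex.re_sum]
  by_cases hdvd : (M : ℤ) ∣ c
  · obtain ⟨d, rfl⟩ := hdvd
    have hz1 : z = 1 := by
      rw [hz]
      have : 2 * (π : ℂ) * Complex.I * (((M : ℤ) * d : ℤ) : ℂ) / M
          = (d : ℂ) * (2 * π * Complex.I) := by
        push_cast
        field_simp
      rw [this, Complex.exp_int_mul_two_pi_mul_I]
    rw [if_pos ⟨d, rfl⟩, hz1]
    simp
  · have hzM : z ^ M = 1 := by
      rw [hz, ← Complex.exp_nat_mul]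
      have : (M : ℂ) * (2 * π * Complex.I * c / M) = (c : ℂ) * (2 * π * Complex.I) := by
        field_simp
      rw [this, Complex.exp_int_mul_two_pi_mul_I]
    have hz1 : z ≠ 1 := by
      intro h
      rw [hz, Complex.exp_eq_one_iff] at h
      obtain ⟨n, hn⟩ := h
      apply hdvd
      refine ⟨n, ?_⟩
      have key : (2 * (π : ℂ) * Complex.I) * (c : ℂ)
          = (2 * (π : ℂ) * Complex.I) * ((M : ℂ) * n) := by
        rw [div_eq_iff hMC] at hn
        linear_combination hn
      have : (c : ℂ) = (M : ℂ) * n := mul_left_cancel₀ h2π key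
      exact_mod_cast this
    rw [geom_sum_eq hz1, hzM]
    simp [if_neg hdvd]

lemma cos_sum_Icc (M : ℕ) (hM : 1 ≤ M) (c : ℤ) :
    ∑ r ∈ Finset.Icc 1 M, Real.cos (2 * π * c * r / M)
      = if (M : ℤ) ∣ c then (M : ℝ) else 0 := by
  have hM0 : (M : ℝ) ≠ 0 := by positivity
  set f : ℕ → ℝ := fun r => Real.cos (2 * π * c * r / M) with hf
  have hf0 : f 0 = 1 := by simp [hf]
  have hfM : f M = 1 := by
    have : 2 * π * c * (M : ℕ) / M = (c : ℝ) * (2 * π) := by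
      field_simp
    simp only [hf, this]
    exact Real.cos_int_mul_two_pi c
  have h1 : ∑ r ∈ Finset.Icc 1 M, f r = ∑ i ∈ Finset.range M, f (1 + i) := by
    rw [← Finset.Ico_add_one_right_eq_Icc, Finset.sum_Ico_eq_sum_range]
    simp
  have h2 : ∑ i ∈ Finset.range M, f (i + 1) + f 0 = ∑ r ∈ Finset.range M, f r + f M := by
    rw [← Finset.sum_range_succ' f M, Finset.sum_range_succ f M]
  have h3 : ∑ i ∈ Finset.range M, f (1 + i) = ∑ r ∈ Finset.range M, f r := by
    simp_rw [add_comm 1]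
    rw [hf0, hfM] at h2
    linarith
  rw [h1, h3]
  exact cos_sum_range M hM c

lemma sin_orth (M t : ℕ) (hM : 2 ≤ M) (ht1 : 1 ≤ t) (ht2 : t < M) (n : ℕ) :
    ∑ r ∈ Finset.Icc 1 M, Real.sin (2 * π * n * r / M) * Real.sin (2 * π * t * r / M)
      = ((M : ℝ) / 2) * ((if n % M = t then 1 else 0) - (if n % M = M - t then 1 else 0)) := by
  have hM0 : (M : ℝ) ≠ 0 := by positivity
  have hprod : ∀ a b : ℝ, Real.sin a * Real.sin b = (Real.cos (a - b) - Real.cos (a + b)) / 2 := by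
    intro a b
    have := Real.cos_sub_cos (a - b) (a + b)
    have h1 : (a - b + (a + b)) / 2 = a := by ring
    have h2 : (a - b - (a + b)) / 2 = -b := by ring
    rw [h1, h2, Real.sin_neg] at this
    linarith
  have key : ∀ r : ℕ, Real.sin (2 * π * n * r / M) * Real.sin (2 * π * t * r / M)
      = (Real.cos (2 * π * ((((n : ℤ) - t) : ℤ) : ℝ) * r / M)
          - Real.cos (2 * π * ((((n : ℤ) + t) : ℤ) : ℝ) * r / M)) / 2 := by
    intro r
    rw [hprod]
    congr 2
    · push_cast; ring
    · push_cast; ring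
  simp_rw [key]
  rw [← Finset.sum_div, Finset.sum_sub_distrib]
  rw [cos_sum_Icc M (by omega) ((n : ℤ) - t), cos_sum_Icc M (by omega) ((n : ℤ) + t)]
  have hc1 : ((M : ℤ) ∣ (n : ℤ) - t) ↔ (n % M = t) := by
    rw [← Nat.modEq_iff_dvd]
    unfold Nat.ModEq
    rw [Nat.mod_eq_of_lt ht2]
    exact comm
  have hc2 : ((M : ℤ) ∣ (n : ℤ) + t) ↔ (n % M = M - t) := by
    have cast1 : ((M - t : ℕ) : ℤ) = (M : ℤ) - t := by
      push_cast [Nat.cast_sub ht2.le]; ring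
    have h1 : ((M : ℤ) ∣ (n : ℤ) + t) ↔ ((M : ℤ) ∣ (n : ℤ) - ((M - t : ℕ) : ℤ)) := by
      rw [cast1]
      constructor
      · intro h
        have := dvd_sub h (dvd_refl (M : ℤ))
        have e : (n : ℤ) - ((M : ℤ) - t) = n + t - M := by ring
        rw [e]; exact this
      · intro h
        have := dvd_add h (dvd_refl (M : ℤ))
        have e : (n : ℤ) + t = n - ((M : ℤ) - t) + M := by ring
        rw [e]; exact this
    rw [h1, ← Nat.modEq_iff_dvd]
    unfold Nat.ModEq
    rw [Nat.mod_eq_of_lt (by omega : M - t < M)]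
    exact comm
  simp only [hc1, hc2]
  split_ifs <;> ring

lemma summable_shift (k : ℕ) (hk : 2 ≤ k) {x : ℝ} (hx : 0 < x) :
    Summable (fun i : ℕ => 1 / ((i : ℝ) + x) ^ k) := by
  rw [← summable_nat_add_iff 1]
  have hbase : Summable (fun i : ℕ => 1 / ((i : ℝ) + 1) ^ k) := by
    have := summable_one_div_nat_pow.mpr hk
    rw [← summable_nat_add_iff 1] at this
    simpa using this
  apply hbase.of_nonneg_of_le (fun i => by positivity)
  intro i
  apply one_div_le_one_div_of_le (by positivity)
  apply pow_le_pow_left₀ (by positivity)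
  push_cast
  linarith

lemma hasSum_ite_mod (k M a : ℕ) (hk : 2 ≤ k) (ha1 : 1 ≤ a) (ha2 : a < M) :
    HasSum (fun n : ℕ => if n % M = a then 1 / (n : ℝ) ^ k else 0)
      ((1 / (M : ℝ) ^ k) * hurwitzZetaValue k ((a : ℝ) / M)) := by
  have hM0 : (M : ℝ) ≠ 0 := Nat.cast_ne_zero.mpr (by omega)
  have hsum : Summable (fun i : ℕ => 1 / ((i : ℝ) + (a : ℝ) / M) ^ k) :=
    summable_shift k hk (div_pos (by exact_mod_cast ha1) (by exact_mod_cast (show 0 < M by omega)))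
  have h1 : HasSum (fun i : ℕ => 1 / ((i : ℝ) + (a : ℝ) / M) ^ k)
      (hurwitzZetaValue k ((a : ℝ) / M)) := hsum.hasSum
  have h2 := h1.mul_left (1 / (M : ℝ) ^ k)
  have key : ∀ i : ℕ, (1 / (M : ℝ) ^ k) * (1 / ((i : ℝ) + (a : ℝ) / M) ^ k)
      = 1 / (((a + i * M : ℕ) : ℝ)) ^ k := by
    intro i
    rw [one_div_mul_one_div, ← mul_pow]
    congr 2
    push_cast
    field_simp
    ring
  simp_rw [key] at h2
  set e : ℕ → ℕ := fun i => a + i * M with he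
  have hinj : Function.Injective e := by
    intro x y hxy
    simp only [he] at hxy
    have := Nat.add_left_cancel hxy
    exact Nat.eq_of_mul_eq_mul_right (by omega) this
  have hvanish : ∀ n ∉ Set.range e, (if n % M = a then 1 / (n : ℝ) ^ k else 0) = 0 := by
    intro n hn
    rw [if_neg]
    intro hmod
    exact hn ⟨n / M, by simp only [he]; rw [← hmod]; exact Nat.mod_add_div' n M⟩
  have hfeq : ((fun n : ℕ => if n % M = a then 1 / (n : ℝ) ^ k else 0) ∘ e)
      = fun i : ℕ => 1 / (((a + i * M : ℕ) : ℝ)) ^ k := by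
    ext i
    simp only [Function.comp_apply, he]
    rw [if_pos (by simp [Nat.add_mul_mod_self_right, Nat.mod_eq_of_lt ha2])]
  rw [← hinj.hasSum_iff hvanish, hfeq]
  exact h2

theorem sin_transform_periodicBernoulli (k M t : ℕ) (hk : 3 ≤ k) (hko : Odd k)
    (hM : 2 ≤ M) (ht1 : 1 ≤ t) (ht2 : t ≤ M - 1) :
    (1 / 2 : ℝ) * ∑ r ∈ Finset.Icc 1 M,
        periodicBernoulli k ((r : ℝ) / M) * Real.sin (2 * Real.pi * t * r / M) =
      ((-1 : ℝ) ^ ((k + 1) / 2) * (Nat.factorial k) / (2 * (2 * Real.pi) ^ k)) *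
        (M : ℝ) ^ (1 - (k : ℤ)) *
        (hurwitzZetaValue k ((t : ℝ) / M) - hurwitzZetaValue k (1 - (t : ℝ) / M)) := by
  obtain ⟨j, hj⟩ := hko
  subst hj
  set K : ℕ := 2 * j + 1 with hK
  have hj1 : 1 ≤ j := by omega
  have hMpos : (0 : ℝ) < M := by exact_mod_cast (by omega : 0 < M)
  have hM0 : (M : ℝ) ≠ 0 := ne_of_gt hMpos
  have htM : t < M := by omega
  set P : Polynomial ℝ := Polynomial.map (algebraMap ℚ ℝ) (Polynomial.bernoulli K) with hP
  set c : ℝ := (-1 : ℝ) ^ (j + 1) * (2 * π) ^ K / 2 / (Nat.factorial K) with hc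
  -- Step 1: termwise Fourier expansion
  have hstep1 : ∀ r ∈ Finset.Icc 1 M,
      HasSum (fun n : ℕ => (1 / (n : ℝ) ^ K * Real.sin (2 * π * n * ((r : ℝ) / M)))
          * Real.sin (2 * π * t * r / M))
        ((c * P.eval ((r : ℝ) / M)) * Real.sin (2 * π * t * r / M)) := by
    intro r hr
    simp only [Finset.mem_Icc] at hr
    have hx : (r : ℝ) / M ∈ Set.Icc (0 : ℝ) 1 :=
      ⟨by positivity, by rw [div_le_one hMpos]; exact_mod_cast hr.2⟩
    exact (hasSum_one_div_nat_pow_mul_sin (by omega : j ≠ 0) hx).mul_right _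
  have hsum1 := hasSum_sum hstep1
  -- Step 2: rewrite each coefficient via orthogonality
  have hfun : ∀ n : ℕ,
      ∑ r ∈ Finset.Icc 1 M, (1 / (n : ℝ) ^ K * Real.sin (2 * π * n * ((r : ℝ) / M)))
          * Real.sin (2 * π * t * r / M)
      = ((M : ℝ) / 2) * ((if n % M = t then 1 / (n : ℝ) ^ K else 0)
          - (if n % M = M - t then 1 / (n : ℝ) ^ K else 0)) := by
    intro n
    have harg : ∀ r : ℕ, (1 / (n : ℝ) ^ K * Real.sin (2 * π * n * ((r : ℝ) / M)))
        * Real.sin (2 * π * t * r / M)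
        = 1 / (n : ℝ) ^ K * (Real.sin (2 * π * n * r / M) * Real.sin (2 * π * t * r / M)) := by
      intro r
      rw [mul_assoc]
      congr 2
      ring
    simp_rw [harg]
    rw [← Finset.mul_sum, sin_orth M t hM ht1 htM n]
    split_ifs <;> ring
  simp_rw [hfun] at hsum1
  -- Step 3: identify the sum with Hurwitz zeta values
  have h1 := hasSum_ite_mod K M t (by omega) ht1 htM
  have h2 := hasSum_ite_mod K M (M - t) (by omega) (by omega) (by omega)
  have hsum2 := (h1.sub h2).mul_left ((M : ℝ) / 2)
  have heq := hsum1.unique hsum2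
  -- Step 4: replace periodicBernoulli by polynomial evaluation
  have hLHS : ∑ r ∈ Finset.Icc 1 M,
      periodicBernoulli K ((r : ℝ) / M) * Real.sin (2 * π * t * r / M)
      = ∑ r ∈ Finset.Icc 1 M, P.eval ((r : ℝ) / M) * Real.sin (2 * π * t * r / M) := by
    refine Finset.sum_congr rfl fun r hr => ?_
    simp only [Finset.mem_Icc] at hr
    by_cases hrM : r = M
    · have hs : Real.sin (2 * π * t * r / M) = 0 := by
        rw [hrM]
        have harg2 : 2 * π * (t : ℝ) * (M : ℝ) / M = ((2 * t : ℕ) : ℝ) * π := by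
          push_cast
          field_simp
        rw [harg2]
        exact Real.sin_nat_mul_pi _
      rw [hs, mul_zero, mul_zero]
    · have hlt : (r : ℝ) / M < 1 := by
        rw [div_lt_one hMpos]
        exact_mod_cast lt_of_le_of_ne hr.2 hrM
      have hfr : Int.fract ((r : ℝ) / M) = (r : ℝ) / M :=
        Int.fract_eq_self.mpr ⟨by positivity, hlt⟩
      have hk1 : ¬(K = 1 ∧ Int.fract ((r : ℝ) / M) = 0) := by
        rintro ⟨h, -⟩
        omega
      rw [periodicBernoulli, if_neg hk1, hfr, Polynomial.aeval_def, ← Polynomial.eval_map]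
  rw [hLHS]
  -- Step 5: final arithmetic
  have hmul : ∑ r ∈ Finset.Icc 1 M, (c * P.eval ((r : ℝ) / M)) * Real.sin (2 * π * t * r / M)
      = c * ∑ r ∈ Finset.Icc 1 M, P.eval ((r : ℝ) / M) * Real.sin (2 * π * t * r / M) := by
    rw [Finset.mul_sum]
    exact Finset.sum_congr rfl fun r _ => by ring
  rw [hmul] at heq
  have hc0 : c ≠ 0 := by
    rw [hc]
    have : (2 * π) ^ K ≠ 0 := pow_ne_zero _ (by positivity)
    have h2 : ((Nat.factorial K : ℝ)) ≠ 0 := Nat.cast_ne_zero.mpr (Nat.factorial_ne_zero K)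
    have h3 : ((-1 : ℝ)) ^ (j + 1) ≠ 0 := pow_ne_zero _ (by norm_num)
    positivity
  have hS : ∑ r ∈ Finset.Icc 1 M, P.eval ((r : ℝ) / M) * Real.sin (2 * π * t * r / M)
      = c⁻¹ * ((M : ℝ) / 2 * (1 / (M : ℝ) ^ K * hurwitzZetaValue K ((t : ℝ) / M)
          - 1 / (M : ℝ) ^ K * hurwitzZetaValue K (((M - t : ℕ) : ℝ) / M))) := by
    rw [← heq, inv_mul_cancel_left₀ hc0]
  rw [hS]
  have hcast : ((M - t : ℕ) : ℝ) / M = 1 - (t : ℝ) / M := by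
    rw [Nat.cast_sub htM.le]
    field_simp
  rw [hcast]
  have hhalf : (K + 1) / 2 = j + 1 := by omega
  rw [hhalf]
  have hzpow : (M : ℝ) ^ (1 - (K : ℤ)) = M * ((M : ℝ) ^ K)⁻¹ := by
    rw [zpow_sub₀ hM0, zpow_one, zpow_natCast, div_eq_mul_inv]
  rw [hzpow]
  set A := hurwitzZetaValue K ((t : ℝ) / M)
  set B := hurwitzZetaValue K (1 - (t : ℝ) / M)
  have hε : ((-1 : ℝ) ^ (j + 1)) * ((-1 : ℝ) ^ (j + 1)) = 1 := by
    rw [← pow_add]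
    exact Even.neg_one_pow ⟨j + 1, by ring⟩
  have hπ : (2 * π) ^ K ≠ 0 := pow_ne_zero _ (by positivity)
  have hfact : ((Nat.factorial K : ℝ)) ≠ 0 := Nat.cast_ne_zero.mpr (Nat.factorial_ne_zero K)
  have hMK : ((M : ℝ) ^ K) ≠ 0 := pow_ne_zero _ hM0
  have hinv : c⁻¹ = (-1 : ℝ) ^ (j + 1) * (2 * (Nat.factorial K : ℝ)) / (2 * π) ^ K := by
    apply inv_eq_of_mul_eq_one_right
    rw [hc]
    field_simp
    linear_combination hε
  rw [hinv]
  field_simp
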